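/- Let n > k ≥ 1 be integers and let h : ℝ → ℝ be twice continuously differentiable. For α ∈ ℝ set ζ̃₂(α) := h(α) cos α − h'(α) sin α. Then for every θ ∈ (−π/2, π/2): (n−k) ∫_θ^{π/2} sin α · [ C(n−1,k−1)(h''(α)+h(α)) ζ̃₂(α)^{k−1} cos^{n−k} α + C(n−1,k) ζ̃₂(α)^{k} cos^{n−1−k} α ] dα = C(n−1,k) ζ̃₂(θ)^{k} cos^{n−k} θ. -/

import Mathlib

open Real

/-- **Firey's integral identity (Section 1).** For a rotationally symmetric hypersurface with
support function `h(θ)` and `ζ̃₂(α) = h(α) cos α − h'(α) sin α`, for `n > k ≥ 1` and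
`θ ∈ (−π/2, π/2)`:
`(n−k) ∫_θ^{π/2} sin α [ C(n−1,k−1)(h''+h) ζ̃₂^{k−1} cos^{n−k} α + C(n−1,k) ζ̃₂^k cos^{n−1−k} α ] dα`
`= C(n−1,k) ζ̃₂(θ)^k cos^{n−k} θ`. -/
theorem stmt_4 (n k : ℕ) (hk : 1 ≤ k) (hkn : k < n)
    (h : ℝ → ℝ) (hh : ContDiff ℝ 2 h)
    (θ : ℝ) (hθ : θ ∈ Set.Ioo (-(π / 2)) (π / 2)) :
    ((n : ℝ) - k) * ∫ α in θ..(π / 2), Real.sin α *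
        ((Nat.choose (n - 1) (k - 1) : ℝ) * (deriv (deriv h) α + h α) *
            (h α * Real.cos α - deriv h α * Real.sin α) ^ (k - 1) * Real.cos α ^ (n - k)
          + (Nat.choose (n - 1) k : ℝ) *
            (h α * Real.cos α - deriv h α * Real.sin α) ^ k * Real.cos α ^ (n - 1 - k)) =
      (Nat.choose (n - 1) k : ℝ) *
        (h θ * Real.cos θ - deriv h θ * Real.sin θ) ^ k * Real.cos θ ^ (n - k) := by
  -- abbreviations
  set m : ℕ := n - k with hm
  have hm1 : 1 ≤ m := Nat.le_sub_of_add_le (by omega)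
  have hmn : n - 1 - k = m - 1 := by omega
  set C : ℝ := (Nat.choose (n - 1) k : ℝ) with hC
  set C' : ℝ := (Nat.choose (n - 1) (k - 1) : ℝ) with hC'
  -- regularity
  have h1 : Differentiable ℝ h := hh.differentiable (by norm_num)
  have hh2 : ContDiff ℝ 1 (deriv h) := by
    have := (contDiff_succ_iff_deriv (n := 1)).mp (by exact_mod_cast hh)
    exact this.2.2
  have h2 : Differentiable ℝ (deriv h) := hh2.differentiable (by norm_num)
  have h3 : Continuous (deriv (deriv h)) := by
    have := (contDiff_succ_iff_deriv (n := 0)).mp (by exact_mod_cast hh2)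
    exact this.2.2.continuous
  -- ζ and its derivative
  set ζ : ℝ → ℝ := fun α => h α * Real.cos α - deriv h α * Real.sin α with hζdef
  have hζ : ∀ α : ℝ, HasDerivAt ζ (-((deriv (deriv h) α + h α) * Real.sin α)) α := by
    intro α
    have hd1 : HasDerivAt (fun α => h α * Real.cos α)
        (deriv h α * Real.cos α + h α * (-Real.sin α)) α :=
      ((h1 α).hasDerivAt).mul (Real.hasDerivAt_cos α)
    have hd2 : HasDerivAt (fun α => deriv h α * Real.sin α)
        (deriv (deriv h) α * Real.sin α + deriv h α * Real.cos α) α :=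
      ((h2 α).hasDerivAt).mul (Real.hasDerivAt_sin α)
    have := hd1.sub hd2
    refine this.congr_deriv ?_
    ring
  -- primitive
  set G : ℝ → ℝ := fun α => -C * ζ α ^ k * Real.cos α ^ m with hGdef
  have hG : ∀ α : ℝ, HasDerivAt G
      ((m : ℝ) * (Real.sin α *
        (C' * (deriv (deriv h) α + h α) * ζ α ^ (k - 1) * Real.cos α ^ m
          + C * ζ α ^ k * Real.cos α ^ (m - 1)))) α := by
    intro α
    have hp1 : HasDerivAt (fun α => ζ α ^ k)
        ((k : ℝ) * ζ α ^ (k - 1) * (-((deriv (deriv h) α + h α) * Real.sin α))) α :=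
      (hζ α).pow k
    have hp2 : HasDerivAt (fun α => Real.cos α ^ m)
        ((m : ℝ) * Real.cos α ^ (m - 1) * (-Real.sin α)) α :=
      (Real.hasDerivAt_cos α).pow m
    have hmul := ((hp1.const_mul (-C)).mul hp2)
    have key : (m : ℝ) * C' = (k : ℝ) * C := by
      have := Nat.choose_succ_right_eq (n - 1) (k - 1)
      rw [Nat.sub_add_cancel hk] at this
      have h2 : (n - 1).choose k * k = (n - 1).choose (k - 1) * m := by
        rw [this]; congr 1; omega
      have := congrArg (fun x : ℕ => (x : ℝ)) h2
      push_cast at this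
      linarith
    refine hmul.congr_deriv ?_
    symm
    have hζk : ζ α ^ k = ζ α ^ (k - 1) * ζ α := by
      conv_lhs => rw [show k = (k - 1) + 1 by omega]
      rw [pow_succ]
    have hcm : Real.cos α ^ m = Real.cos α ^ (m - 1) * Real.cos α := by
      conv_lhs => rw [show m = (m - 1) + 1 by omega]
      rw [pow_succ]
    rw [hζk, hcm]
    linear_combination (Real.sin α * (deriv (deriv h) α + h α) * ζ α ^ (k - 1) *
      (Real.cos α ^ (m - 1) * Real.cos α)) * key
  -- continuity of the integrand times m
  have hcont : Continuous (fun α => (m : ℝ) * (Real.sin α *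
      (C' * (deriv (deriv h) α + h α) * ζ α ^ (k - 1) * Real.cos α ^ m
        + C * ζ α ^ k * Real.cos α ^ (m - 1)))) := by
    have hζc : Continuous ζ := by
      exact (h1.continuous.mul Real.continuous_cos).sub
        (h2.continuous.mul Real.continuous_sin)
    fun_prop
  have hFTC : ∫ α in θ..(π / 2), (m : ℝ) * (Real.sin α *
      (C' * (deriv (deriv h) α + h α) * ζ α ^ (k - 1) * Real.cos α ^ m
        + C * ζ α ^ k * Real.cos α ^ (m - 1))) = G (π / 2) - G θ := by
    exact intervalIntegral.integral_eq_sub_of_hasDerivAt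
      (fun x _ => hG x) (hcont.intervalIntegrable _ _)
  rw [intervalIntegral.integral_const_mul] at hFTC
  have hGpi : G (π / 2) = 0 := by
    simp only [hGdef]
    rw [Real.cos_pi_div_two, zero_pow (by omega : m ≠ 0), mul_zero]
  have hcast : ((n : ℝ) - k) = (m : ℝ) := by
    rw [hm, Nat.cast_sub hkn.le]
  rw [hcast, hmn]
  have hint : (∫ α in θ..(π / 2), Real.sin α *
        (C' * (deriv (deriv h) α + h α) * ζ α ^ (k - 1) * Real.cos α ^ m
          + C * ζ α ^ k * Real.cos α ^ (m - 1))) =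
      (∫ α in θ..(π / 2), Real.sin α *
        ((Nat.choose (n - 1) (k - 1) : ℝ) * (deriv (deriv h) α + h α) *
            (h α * Real.cos α - deriv h α * Real.sin α) ^ (k - 1) * Real.cos α ^ (n - k)
          + (Nat.choose (n - 1) k : ℝ) *
            (h α * Real.cos α - deriv h α * Real.sin α) ^ k * Real.cos α ^ (m - 1))) := rfl
  rw [← hint]
  rw [hGpi] at hFTC
  have : (m : ℝ) * ∫ α in θ..(π / 2), Real.sin α *
      (C' * (deriv (deriv h) α + h α) * ζ α ^ (k - 1) * Real.cos α ^ m
        + C * ζ α ^ k * Real.cos α ^ (m - 1)) = 0 - G θ := hFTC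
  rw [this, hGdef]
  simp only [hζdef]
  ring
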